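/- Fix c > 0 and L̄ > 0, with L = L̄·log₂ n and K = c·n/L. For any constant γ₀ > -1/log₂(1 - e^{-c}), the quantity K·(1 - (1 - L/n)^{K-1})^{γ₀·log₂ n - 1} tends to 0 as n → ∞. -/

import Mathlib

open Real Filter

private lemma aux_log_div : Tendsto (fun x : ℝ => Real.log x / x) atTop (nhds 0) := by
  simpa using Real.tendsto_pow_log_div_mul_add_atTop 1 0 1 one_ne_zero

private lemma aux_div_log : Tendsto (fun x : ℝ => x / Real.log x) atTop atTop := by
  have h1 : Tendsto (fun x : ℝ => Real.log x / x) atTop (nhdsWithin 0 (Set.Ioi 0)) := by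
    rw [tendsto_nhdsWithin_iff]
    refine ⟨aux_log_div, ?_⟩
    filter_upwards [eventually_gt_atTop (1 : ℝ)] with x hx
    exact Set.mem_Ioi.2 (div_pos (Real.log_pos hx) (lt_trans one_pos hx))
  have := h1.inv_tendsto_nhdsGT_zero
  refine this.congr fun x => ?_
  simp [inv_div]

theorem stmt9 (c Lb γ₀ : ℝ) (hc : 0 < c) (hL : 0 < Lb)
    (hγ : γ₀ > -1 / Real.logb 2 (1 - Real.exp (-c))) :
    Tendsto (fun n : ℕ =>
      (c * n / (Lb * Real.logb 2 n)) *
        (1 - (1 - Lb * Real.logb 2 n / n) ^ (c * n / (Lb * Real.logb 2 n) - 1)) ^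
          (γ₀ * Real.logb 2 n - 1))
      atTop (nhds 0) := by
  have log2pos : (0:ℝ) < Real.log 2 := Real.log_pos one_lt_two
  set β : ℝ := 1 - Real.exp (-c) with hβdef
  have hβ0 : 0 < β := by
    have : Real.exp (-c) < 1 := Real.exp_lt_one_iff.2 (neg_neg_of_pos hc)
    simpa [hβdef] using this
  have hβ1 : β < 1 := by
    have := Real.exp_pos (-c)
    simp only [hβdef]
    linarith
  have hlogβ : Real.log β < 0 := Real.log_neg hβ0 hβ1
  -- the crucial negativity of the limit exponent
  have hq : Real.logb 2 β < 0 := div_neg_of_neg_of_pos hlogβ log2pos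
  have ha : 1 + γ₀ / Real.log 2 * Real.log β < 0 := by
    have h := (div_lt_iff_of_neg hq).1 hγ
    have : γ₀ * Real.logb 2 β < -1 := by linarith [h]
    rw [Real.logb] at this
    have heq : γ₀ / Real.log 2 * Real.log β = γ₀ * (Real.log β / Real.log 2) := by ring
    linarith
  -- sequences
    -- x n → 0
  set x : ℕ → ℝ := fun n => Lb * Real.logb 2 n / n with hxdef
  set y : ℕ → ℝ := fun n => c * n / (Lb * Real.logb 2 n) with hydef
  set e : ℕ → ℝ := fun n => γ₀ * Real.logb 2 n - 1 with hedef
  set b : ℕ → ℝ := fun n => 1 - (1 - x n) ^ (y n - 1) with hbdef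
  have hnat : Tendsto (fun n : ℕ => (n : ℝ)) atTop atTop := tendsto_natCast_atTop_atTop
  have hlogn : Tendsto (fun n : ℕ => Real.log n) atTop atTop :=
    Real.tendsto_log_atTop.comp hnat
  have hx0 : Tendsto x atTop (nhds 0) := by
    have hxeq : x = fun n : ℕ => (Lb / Real.log 2) * (Real.log n / n) := by
      funext n
      simp only [hxdef, Real.logb, div_eq_mul_inv, mul_inv]
      ring
    rw [hxeq]
    simpa using (aux_log_div.comp hnat).const_mul (Lb / Real.log 2)
  have hy : Tendsto y atTop atTop := by
    have hyeq : y = fun n : ℕ => (c * Real.log 2 / Lb) * ((n:ℝ) / Real.log n) := by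
      funext n
      simp only [hydef, Real.logb, div_eq_mul_inv, mul_inv, inv_inv]
      ring
    rw [hyeq]
    exact (aux_div_log.comp hnat).const_mul_atTop
      (by positivity : (0:ℝ) < c * Real.log 2 / Lb)
  -- eventually facts for n ≥ 2
  have hev2 : ∀ᶠ n : ℕ in atTop, 1 < Real.logb 2 n ∧ 0 < Real.log n ∧ (0:ℝ) < n := by
    filter_upwards [eventually_ge_atTop 3] with n hn
    have hn3 : (3:ℝ) ≤ (n:ℝ) := by exact_mod_cast hn
    have hn1 : (1:ℝ) < (n:ℝ) := by linarith
    refine ⟨?_, Real.log_pos hn1, by linarith⟩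
    have : Real.logb 2 2 < Real.logb 2 n :=
      Real.logb_lt_logb one_lt_two (by norm_num) (by linarith)
    simpa using this
  -- y n * log (1 - x n) → -c
  have ht : Tendsto (fun n : ℕ => y n * Real.log (1 - x n)) atTop (nhds (-c)) := by
    have h0 := (Real.tendsto_mul_log_one_add_div_atTop (-c)).comp hy
    refine h0.congr' ?_
    filter_upwards [hev2] with n hn
    have hlbn : (0:ℝ) < Real.logb 2 n := lt_trans one_pos hn.1
    have hlb : Lb * Real.logb 2 n ≠ 0 := ne_of_gt (mul_pos hL hlbn)
    have hyne : y n ≠ 0 :=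
      div_ne_zero (ne_of_gt (mul_pos hc hn.2.2)) hlb
    have hxy : 1 + -c / y n = 1 - x n := by
      simp only [hydef, hxdef]
      rw [div_div_eq_mul_div]
      have hn0 : (n:ℝ) ≠ 0 := ne_of_gt hn.2.2
      field_simp
      ring
    simp only [Function.comp]
    rw [hxy]
  have hlog1x : Tendsto (fun n : ℕ => Real.log (1 - x n)) atTop (nhds 0) := by
    have h1 : Tendsto (fun n : ℕ => 1 - x n) atTop (nhds 1) := by
      simpa using tendsto_const_nhds.sub hx0
    have := (Real.continuousAt_log one_ne_zero).tendsto.comp h1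
    simpa [Function.comp_def] using this
  have ht' : Tendsto (fun n : ℕ => (y n - 1) * Real.log (1 - x n)) atTop (nhds (-c)) := by
    have := ht.sub hlog1x
    simp only [sub_zero] at this
    refine this.congr fun n => by ring
  -- b n → β
  have hxlt : ∀ᶠ n : ℕ in atTop, x n < 1 :=
    hx0.eventually (eventually_lt_nhds one_pos)
  have hbase : Tendsto (fun n : ℕ => (1 - x n) ^ (y n - 1)) atTop (nhds (Real.exp (-c))) := by
    have h0 := (Real.continuous_exp.tendsto (-c)).comp ht'
    refine h0.congr' ?_
    filter_upwards [hxlt] with n hn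
    have : (0:ℝ) < 1 - x n := by linarith
    rw [Real.rpow_def_of_pos this]
    simp only [Function.comp]
    ring_nf
  have hb : Tendsto b atTop (nhds β) := by
    simpa [hβdef] using tendsto_const_nhds.sub hbase
  have hbpos : ∀ᶠ n : ℕ in atTop, 0 < b n := hb.eventually (eventually_gt_nhds hβ0)
  have hlogb : Tendsto (fun n : ℕ => Real.log (b n)) atTop (nhds (Real.log β)) :=
    (Real.continuousAt_log hβ0.ne').tendsto.comp hb
  -- auxiliary h and its limit
  set h : ℕ → ℝ := fun n =>
      (Real.log c - Real.log Lb) * (Real.log n)⁻¹ -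
        Real.log (Real.logb 2 n) * (Real.log n)⁻¹ + 1 +
        (γ₀ / Real.log 2 - (Real.log n)⁻¹) * Real.log (b n) with hhdef
  have hinv : Tendsto (fun n : ℕ => (Real.log n)⁻¹) atTop (nhds 0) :=
    tendsto_inv_atTop_zero.comp hlogn
  have hloglog : Tendsto (fun n : ℕ => Real.log (Real.logb 2 n) * (Real.log n)⁻¹)
      atTop (nhds 0) := by
    have h1 : Tendsto (fun n : ℕ => Real.log (Real.log n) / Real.log n) atTop (nhds 0) :=
      aux_log_div.comp hlogn
    have h2 : Tendsto (fun n : ℕ =>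
        Real.log (Real.log n) / Real.log n - Real.log (Real.log 2) * (Real.log n)⁻¹)
        atTop (nhds 0) := by
      simpa using h1.sub (hinv.const_mul (Real.log (Real.log 2)))
    refine h2.congr' ?_
    filter_upwards [hev2] with n hn
    rw [Real.logb, Real.log_div (ne_of_gt hn.2.1) (ne_of_gt log2pos)]
    ring
  have hh : Tendsto h atTop (nhds (1 + γ₀ / Real.log 2 * Real.log β)) := by
    have := ((((hinv.const_mul (Real.log c - Real.log Lb)).sub hloglog).add
      (tendsto_const_nhds (x := (1:ℝ)))).add
      (((tendsto_const_nhds (x := γ₀ / Real.log 2)).sub hinv).mul hlogb))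
    simpa using this
  -- log n * h n = log (y n) + e n * log (b n) eventually
  have hgh : ∀ᶠ n : ℕ in atTop,
      Real.log n * h n = Real.log (y n) + e n * Real.log (b n) := by
    filter_upwards [hev2] with n hn
    have hlogbn : (0:ℝ) < Real.logb 2 n := lt_trans one_pos hn.1
    have hln : Real.log n ≠ 0 := ne_of_gt hn.2.1
    have hlogy : Real.log (y n) =
        Real.log c + Real.log n - (Real.log Lb + Real.log (Real.logb 2 n)) := by
      simp only [hydef]
      rw [Real.log_div (ne_of_gt (mul_pos hc hn.2.2)) (ne_of_gt (mul_pos hL hlogbn)),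
        Real.log_mul (ne_of_gt hc) (ne_of_gt hn.2.2),
        Real.log_mul (ne_of_gt hL) (ne_of_gt hlogbn)]
    rw [hlogy]
    simp only [hhdef, hedef, Real.logb]
    field_simp
    ring
  -- conclude
  have hg : Tendsto (fun n : ℕ => Real.log (y n) + e n * Real.log (b n)) atTop atBot :=
    (hlogn.atTop_mul_neg ha hh).congr' hgh
  have hfinal : Tendsto (fun n : ℕ =>
      Real.exp (Real.log (y n) + e n * Real.log (b n))) atTop (nhds 0) :=
    Real.tendsto_exp_atBot.comp hg
  have hypos : ∀ᶠ n : ℕ in atTop, 0 < y n := hy.eventually (eventually_gt_atTop 0)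
  refine hfinal.congr' ?_
  filter_upwards [hypos, hbpos] with n hy0 hb0
  rw [Real.exp_add, Real.exp_log hy0, Real.rpow_def_of_pos hb0, mul_comm (Real.log (b n))]
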